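/- Applying the degree-(r−1) Veronese map to each column of a 2×n matrix yields an r×n matrix whose maximal minor on columns indexed by an r-subset I equals ∏_{i<j, i,j ∈ I} (x_i y_j − x_j y_i), i.e., the product of the 2×2 minors of the original matrix over all pairs of columns in I. -/

import Mathlib

open scoped BigOperators

private lemma aux_pairs {M : Type*} [CommMonoid M] {r : ℕ} (f : Fin r → Fin r → M) :
    ∏ i : Fin r, ∏ j ∈ Finset.Ioi i, f i j = ∏ j : Fin r, ∏ i ∈ Finset.Iio j, f i j := by
  rw [Finset.prod_comm' (s := Finset.univ) (t := fun i => Finset.Ioi i)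
    (t' := Finset.univ) (s' := fun j => Finset.Iio j)]
  intro i j
  simp [Finset.mem_Ioi, Finset.mem_Iio]

private lemma aux_field {K : Type*} [Field K] {r : ℕ} (u v : Fin r → K)
    (hu : ∀ b, u b ≠ 0) :
    Matrix.det (Matrix.of fun a b : Fin r => u b ^ (r - 1 - (a : ℕ)) * v b ^ (a : ℕ)) =
      ∏ i : Fin r, ∏ j ∈ Finset.Ioi i, (u i * v j - u j * v i) := by
  set t : Fin r → K := fun b => v b * (u b)⁻¹ with ht
  have key : (Matrix.of fun a b : Fin r => u b ^ (r - 1 - (a : ℕ)) * v b ^ (a : ℕ)) =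
      Matrix.of fun a b : Fin r => (u b ^ (r - 1)) * (t b ^ (a : ℕ)) := by
    ext a b
    have ha : (a : ℕ) ≤ r - 1 := Nat.le_sub_one_of_lt a.isLt
    simp only [Matrix.of_apply, ht]
    rw [mul_pow, inv_pow, pow_sub₀ _ (hu b) ha]
    field_simp
  rw [key, Matrix.det_mul_row (fun b => u b ^ (r - 1)) (fun a b : Fin r => t b ^ (a : ℕ))]
  have hvdm : (Matrix.det fun a b : Fin r => t b ^ (a : ℕ)) =
      ∏ i : Fin r, ∏ j ∈ Finset.Ioi i, (t j - t i) := by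
    rw [← Matrix.det_vandermonde t, ← Matrix.det_transpose]
    rfl
  rw [hvdm]
  have step : ∀ i j : Fin r, i < j → u i * v j - u j * v i = u i * u j * (t j - t i) := by
    intro i j _
    have hi := hu i
    have hj := hu j
    simp only [ht]
    field_simp
  rw [Finset.prod_congr rfl (fun i _ => Finset.prod_congr rfl
      (fun j hj => step i j (Finset.mem_Ioi.mp hj)))]
  have expand : ∏ i : Fin r, ∏ j ∈ Finset.Ioi i, (u i * u j * (t j - t i)) =
      ((∏ i : Fin r, ∏ j ∈ Finset.Ioi i, u i) * (∏ i : Fin r, ∏ j ∈ Finset.Ioi i, u j))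
        * ∏ i : Fin r, ∏ j ∈ Finset.Ioi i, (t j - t i) := by
    simp [Finset.prod_mul_distrib]
  rw [expand, aux_pairs (fun _ j => u j)]
  have h1 : ∏ i : Fin r, ∏ _j ∈ Finset.Ioi i, u i = ∏ i : Fin r, u i ^ (r - 1 - (i : ℕ)) := by
    refine Finset.prod_congr rfl fun i _ => ?_
    rw [Finset.prod_const, Fin.card_Ioi]
  have h2 : ∏ j : Fin r, ∏ _i ∈ Finset.Iio j, u j = ∏ j : Fin r, u j ^ (j : ℕ) := by
    refine Finset.prod_congr rfl fun j _ => ?_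
    rw [Finset.prod_const, Fin.card_Iio]
  rw [h1, h2]
  congr 1
  rw [← Finset.prod_mul_distrib]
  refine Finset.prod_congr rfl fun i _ => ?_
  rw [← pow_add]
  congr 1
  have := i.isLt
  omega

private lemma aux_poly {r : ℕ} :
    Matrix.det (Matrix.of fun a b : Fin r =>
        (MvPolynomial.X (R := ℤ) (Sum.inl b) : MvPolynomial (Fin r ⊕ Fin r) ℤ) ^ (r - 1 - (a : ℕ))
          * MvPolynomial.X (Sum.inr b) ^ (a : ℕ)) =
      ∏ i : Fin r, ∏ j ∈ Finset.Ioi i,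
        ((MvPolynomial.X (R := ℤ) (Sum.inl i) : MvPolynomial (Fin r ⊕ Fin r) ℤ)
            * MvPolynomial.X (Sum.inr j)
          - MvPolynomial.X (Sum.inl j) * MvPolynomial.X (Sum.inr i)) := by
  set S := MvPolynomial (Fin r ⊕ Fin r) ℤ
  have hinj : Function.Injective (algebraMap S (FractionRing S)) :=
    IsFractionRing.injective S (FractionRing S)
  apply hinj
  have := aux_field (K := FractionRing S)
    (fun i => algebraMap S (FractionRing S) (MvPolynomial.X (Sum.inl i)))
    (fun i => algebraMap S (FractionRing S) (MvPolynomial.X (Sum.inr i)))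
    (fun i => by
      simp only [ne_eq, map_eq_zero_iff _ hinj]
      exact MvPolynomial.X_ne_zero _)
  rw [RingHom.map_det, map_prod]
  convert this using 2 with i
  · rfl
  · ext a b
    simp [Matrix.map_apply]
  · rw [map_prod]
    refine Finset.prod_congr rfl fun j _ => ?_
    simp

private lemma aux_ring {R : Type*} [CommRing R] {r : ℕ} (u v : Fin r → R) :
    Matrix.det (Matrix.of fun a b : Fin r => u b ^ (r - 1 - (a : ℕ)) * v b ^ (a : ℕ)) =
      ∏ i : Fin r, ∏ j ∈ Finset.Ioi i, (u i * v j - u j * v i) := by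
  have base := aux_poly (r := r)
  have := congrArg (MvPolynomial.aeval (R := ℤ) (Sum.elim u v)).toRingHom base
  rw [RingHom.map_det, map_prod] at this
  convert this using 2 with i
  · ext a b
    simp [Matrix.map_apply, MvPolynomial.aeval_X]
  · rw [map_prod]
    refine Finset.prod_congr rfl fun j _ => ?_
    simp [MvPolynomial.aeval_X]

/-- Applying the degree-`(r−1)` Veronese map to each column of the `2×n` matrix with
columns `(x_b, y_b)ᵀ` gives the `r×n` matrix with entries `x_b^{r-1-a} y_b^a`.  The
maximal minor on the columns of an `r`-subset `I` of `[n]` (given by a strictly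
monotone `e : Fin r → Fin n`) equals the product of the `2×2` minors
`∏_{i<j, i,j ∈ I} (x_i y_j − x_j y_i)` of the original matrix. -/
theorem stmt_10 (R : Type*) [CommRing R] (n r : ℕ) (x y : Fin n → R)
    (e : Fin r → Fin n) (he : StrictMono e) :
    Matrix.det (Matrix.of fun a b : Fin r =>
        x (e b) ^ (r - 1 - (a : ℕ)) * y (e b) ^ (a : ℕ)) =
      ∏ i : Fin r, ∏ j ∈ Finset.Ioi i, (x (e i) * y (e j) - x (e j) * y (e i)) := by
  exact aux_ring (fun i => x (e i)) (fun i => y (e i))
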